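/- arXiv:1908.11409 — 2 statements merged into one kernel-verified Lean document; each statement's English description precedes it below -/
import Mathlib

section
/- Let $N \ge 1$ and let $a_1, \dots, a_N$ be integers with $a_j \ge 2$ for all $j$. Let $P(x_1,\dots,x_N) = x_1^{a_1}x_2 + \cdots + x_{N-1}^{a_{N-1}}x_N + x_N^{a_N}$ be the chain polynomial over $\mathbb{C}$. If $x \in \mathbb{C}^N$ is a point at which all partial derivatives $\partial P/\partial x_1, \dots, \partial P/\partial x_N$ vanish, then $x = 0$. In other words, the chain polynomial has an isolated singularity at the origin. -/
/-- The chain polynomial `P = ∑_{j<N-1} x_j^{a_j} x_{j+1} + x_{N-1}^{a_{N-1}}`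
(with all `a_j ≥ 2`) has an isolated singularity at the origin: if all partial
derivatives of `P` vanish at `x`, then `x = 0`. (Indices are 0-based.) -/
theorem chain_isolated_singularity (N : ℕ) (hN : 1 ≤ N) (a : ℕ → ℕ)
    (ha : ∀ j < N, 2 ≤ a j) (x : ℕ → ℂ)
    (hcrit : ∀ i < N,
      deriv (fun t : ℂ =>
        (∑ j ∈ Finset.range (N - 1),
            (Function.update x i t) j ^ a j * (Function.update x i t) (j + 1))
          + (Function.update x i t) (N - 1) ^ a (N - 1)) (x i) = 0) :
    ∀ j < N, x j = 0 := by
  have ha0 : ∀ j < N, (a j : ℂ) ≠ 0 := by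
    intro j hj
    have := ha j hj
    exact_mod_cast Nat.cast_ne_zero.mpr (by omega)
  -- Step 1: explicit critical equations
  have heq : ∀ i < N,
      (if i + 1 < N then (a i : ℂ) * x i ^ (a i - 1) * x (i+1) else 0)
        + (if 1 ≤ i then x (i-1) ^ a (i-1) else 0)
        + (if i = N - 1 then (a i : ℂ) * x i ^ (a i - 1) else 0) = 0 := by
    intro i hi
    set d : ℕ → ℂ := fun j =>
      (if j = i then (a i : ℂ) * x i ^ (a i - 1) * x (i+1) else 0)
        + (if j + 1 = i then x j ^ a j else 0) with hd
    have hterm : ∀ j, HasDerivAt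
        (fun t : ℂ => Function.update x i t j ^ a j * Function.update x i t (j+1))
        (d j) (x i) := by
      intro j
      rcases eq_or_ne j i with rfl | hji
      · have h1 : j + 1 ≠ j := Nat.succ_ne_self j
        simp only [Function.update_self, Function.update_of_ne h1, hd]
        simpa [h1] using (hasDerivAt_pow (a j) (x j)).mul_const (x (j+1))
      · rcases eq_or_ne (j+1) i with hj1 | hj1
        · subst hj1
          simp only [Function.update_of_ne hji, Function.update_self, hd]
          simpa [hji] using (hasDerivAt_id (x (j+1))).const_mul (x j ^ a j)
        · simp only [Function.update_of_ne hji, Function.update_of_ne hj1, hd,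
            if_neg hji, if_neg hj1, add_zero]
          exact hasDerivAt_const _ _
    have htail : HasDerivAt (fun t : ℂ => Function.update x i t (N-1) ^ a (N-1))
        (if i = N - 1 then (a i : ℂ) * x i ^ (a i - 1) else 0) (x i) := by
      rcases eq_or_ne i (N-1) with rfl | hi1
      · simpa using hasDerivAt_pow (a (N-1)) (x (N-1))
      · simp only [Function.update_of_ne (Ne.symm hi1), if_neg hi1]
        exact hasDerivAt_const _ _
    have H : HasDerivAt (fun t : ℂ =>
        (∑ j ∈ Finset.range (N - 1),
            (Function.update x i t) j ^ a j * (Function.update x i t) (j + 1))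
          + (Function.update x i t) (N - 1) ^ a (N - 1))
        ((∑ j ∈ Finset.range (N-1), d j)
          + (if i = N - 1 then (a i : ℂ) * x i ^ (a i - 1) else 0)) (x i) :=
      (HasDerivAt.fun_sum (fun j _ => hterm j)).add htail
    have hc := hcrit i hi
    rw [H.deriv] at hc
    -- simplify the sum of d
    have hsum : (∑ j ∈ Finset.range (N-1), d j)
        = (if i + 1 < N then (a i : ℂ) * x i ^ (a i - 1) * x (i+1) else 0)
          + (if 1 ≤ i then x (i-1) ^ a (i-1) else 0) := by
      rw [hd, Finset.sum_add_distrib]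
      congr 1
      · rw [Finset.sum_ite_eq' (Finset.range (N-1)) i]
        simp only [Finset.mem_range]
        congr 1
        · simp only [eq_iff_iff]; omega
      · rcases Nat.eq_zero_or_pos i with hi0 | hi0
        · subst hi0
          simp
        · obtain ⟨k, rfl⟩ : ∃ k, i = k + 1 := ⟨i - 1, by omega⟩
          have : ∀ j, (j + 1 = k + 1) ↔ (j = k) := by omega
          simp only [this]
          rw [Finset.sum_ite_eq' (Finset.range (N-1)) k]
          have hk : k ∈ Finset.range (N-1) := Finset.mem_range.mpr (by omega)
          simp [hk]
    rw [hsum] at hc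
    exact hc
  -- Step 2: linear-algebraic consequence for 0 < i < N
  have hE : ∀ i, 0 < i → i < N →
      x (i-1) ^ a (i-1)
        = -((a i : ℂ) * x i ^ (a i - 1) * (if i = N-1 then 1 else x (i+1))) := by
    intro i hi0 hiN
    have h := heq i hiN
    rcases eq_or_ne i (N-1) with hc | hc
    · rw [if_pos hc]
      rw [if_neg (by omega : ¬ i + 1 < N), if_pos (by omega : 1 ≤ i), if_pos hc] at h
      linear_combination h
    · rw [if_neg hc]
      rw [if_pos (by omega : i + 1 < N), if_pos (by omega : 1 ≤ i), if_neg hc] at h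
      linear_combination h
  -- zero propagates down
  have hzero_step : ∀ i, 0 < i → i < N → x i = 0 → x (i-1) = 0 := by
    intro i hi0 hiN hx
    have h := hE i hi0 hiN
    rw [hx, zero_pow (by have := ha i hiN; omega)] at h
    simp only [mul_zero, zero_mul, neg_zero] at h
    exact pow_eq_zero_iff (by have := ha (i-1) (by omega); omega) |>.mp h
  -- Step 3: x (N-1) = 0
  have hlast : x (N-1) = 0 := by
    by_contra hne
    have key : ∀ k, ∀ j, j + k = N - 1 → x j ≠ 0 := by
      intro k
      induction k using Nat.strong_induction_on with
      | _ k ih =>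
        match k, ih with
        | 0, _ =>
          intro j hj
          have : j = N - 1 := by omega
          rwa [this]
        | k+1, ih =>
          intro j hj
          have hx1 : x (j+1) ≠ 0 := ih k (by omega) (j+1) (by omega)
          have hjN : j + 1 < N := by omega
          have hEj := hE (j+1) (Nat.succ_pos j) hjN
          simp only [Nat.add_sub_cancel] at hEj
          have hy : (if j + 1 = N-1 then (1:ℂ) else x (j+2)) ≠ 0 := by
            rcases eq_or_ne (j+1) (N-1) with hc | hc
            · simp [hc]
            · rw [if_neg hc]
              exact ih (k-1) (by omega) (j+2) (by omega)
          have hpow : x j ^ a j ≠ 0 := by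
            rw [hEj]
            exact neg_ne_zero.mpr (mul_ne_zero
              (mul_ne_zero (ha0 (j+1) hjN) (pow_ne_zero _ hx1)) hy)
          intro h
          exact hpow (by rw [h]; exact zero_pow (by have := ha j (by omega); omega))
    have h0 := heq 0 (by omega)
    rcases eq_or_ne N 1 with hN1 | hN1
    · subst hN1
      have h0' : (a 0 : ℂ) * x 0 ^ (a 0 - 1) = 0 := by simpa using h0
      have hx0 : x 0 ^ (a 0 - 1) = 0 := by
        rcases mul_eq_zero.mp h0' with h | h
        · exact absurd h (ha0 0 (by omega))
        · exact h
      exact hne (pow_eq_zero_iff (by have := ha 0 (by omega); omega) |>.mp hx0)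
    · have hN2 : 2 ≤ N := by omega
      have h1 : (0:ℕ) + 1 < N := by omega
      have h2 : ¬ (1 ≤ (0:ℕ)) := by omega
      have h3 : (0:ℕ) ≠ N - 1 := by omega
      rw [if_pos h1, if_neg h2, if_neg h3, add_zero, add_zero] at h0
      have hx0 : x 0 ≠ 0 := key (N-1) 0 (by omega)
      have hx1 : x 1 ≠ 0 := key (N-2) 1 (by omega)
      exact (mul_ne_zero (mul_ne_zero (ha0 0 (by omega))
        (pow_ne_zero _ hx0)) hx1) h0
  -- Step 4: descending induction
  have key2 : ∀ k j, j + k = N - 1 → x j = 0 := by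
    intro k
    induction k with
    | zero =>
      intro j hj
      have : j = N - 1 := by omega
      rwa [this]
    | succ k ih =>
      intro j hj
      have h1 := ih (j+1) (by omega)
      have := hzero_step (j+1) (Nat.succ_pos j) (by omega) h1
      simpa using this
  intro j hj
  exact key2 (N-1-j) j (by omega)
end

section
/- Let $N \ge 2$ and let $a_1, \dots, a_N$ be integers with $a_j \ge 2$ for all $j$. Let $P(x_1,\dots,x_N) = x_1^{a_1}x_2 + \cdots + x_{N-1}^{a_{N-1}}x_N + x_N^{a_N}x_1$ be the loop polynomial over $\mathbb{C}$. If $x \in \mathbb{C}^N$ is a point at which all partial derivatives of $P$ vanish, then $x = 0$. -/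
private lemma term_hasDerivAt (x : ℕ → ℂ) (i p q k : ℕ) (_hk : 1 ≤ k) (hpq : p ≠ q) :
    HasDerivAt (fun t : ℂ => (Function.update x i t) p ^ k * (Function.update x i t) q)
      ((if p = i then (k : ℂ) * x i ^ (k - 1) * x q else 0)
        + (if q = i then x p ^ k else 0)) (x i) := by
  simp only [Function.update_apply]
  by_cases hp : p = i
  · have hq : ¬ q = i := fun h => hpq (hp.trans h.symm)
    simp only [hp, hq, if_true, if_false, eq_self_iff_true, add_zero]
    exact (hasDerivAt_pow k (x i)).mul_const (x q)
  · by_cases hq : q = i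
    · simp only [hp, hq, if_true, if_false, eq_self_iff_true, zero_add]
      simpa using (hasDerivAt_id (x i)).const_mul (x p ^ k)
    · simp only [hp, hq, if_false, add_zero]
      exact hasDerivAt_const (x i) (x p ^ k * x q)

/-- The loop polynomial `P = ∑_{j<N-1} x_j^{a_j} x_{j+1} + x_{N-1}^{a_{N-1}} x_0`
(with all `a_j ≥ 2`) has an isolated singularity at the origin: if all partial
derivatives of `P` vanish at `x`, then `x = 0`. (Indices are 0-based.) -/
theorem loop_isolated_singularity (N : ℕ) (hN : 2 ≤ N) (a : ℕ → ℕ)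
    (ha : ∀ j < N, 2 ≤ a j) (x : ℕ → ℂ)
    (hcrit : ∀ i < N,
      deriv (fun t : ℂ =>
        (∑ j ∈ Finset.range (N - 1),
            (Function.update x i t) j ^ a j * (Function.update x i t) (j + 1))
          + (Function.update x i t) (N - 1) ^ a (N - 1)
            * (Function.update x i t) 0) (x i) = 0) :
    ∀ j < N, x j = 0 := by
  -- The critical point equations in closed form.
  have key : ∀ i, i < N → (a i : ℂ) * x i ^ (a i - 1) * x ((i + 1) % N)
      + x ((i + N - 1) % N) ^ a ((i + N - 1) % N) = 0 := by
    intro i hi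
    have hD : HasDerivAt (fun t : ℂ =>
        (∑ j ∈ Finset.range (N - 1),
            (Function.update x i t) j ^ a j * (Function.update x i t) (j + 1))
          + (Function.update x i t) (N - 1) ^ a (N - 1) * (Function.update x i t) 0)
        ((∑ j ∈ Finset.range (N - 1),
            ((if j = i then (a j : ℂ) * x i ^ (a j - 1) * x (j + 1) else 0)
              + (if j + 1 = i then x j ^ a j else 0)))
          + ((if N - 1 = i then (a (N-1) : ℂ) * x i ^ (a (N-1) - 1) * x 0 else 0)
              + (if 0 = i then x (N-1) ^ a (N-1) else 0))) (x i) := by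
      refine (HasDerivAt.fun_sum fun j hj => ?_).add
        (term_hasDerivAt x i (N-1) 0 (a (N-1)) (by have := ha (N-1) (by omega); omega)
          (by omega))
      have hj' : j < N - 1 := Finset.mem_range.mp hj
      exact term_hasDerivAt x i j (j+1) (a j) (by have := ha j (by omega); omega) (by omega)
    have h0 := hcrit i hi
    rw [hD.deriv] at h0
    have hsum1 : (∑ j ∈ Finset.range (N-1), if j = i then (a j : ℂ) * x i ^ (a j - 1) * x (j + 1) else 0)
        = if i < N - 1 then (a i : ℂ) * x i ^ (a i - 1) * x (i + 1) else 0 := by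
      rw [show (∑ j ∈ Finset.range (N-1), if j = i then (a j : ℂ) * x i ^ (a j - 1) * x (j + 1) else 0)
          = ∑ j ∈ Finset.range (N-1), if i = j then (a j : ℂ) * x i ^ (a j - 1) * x (j + 1) else 0 from
        Finset.sum_congr rfl fun j _ => if_congr (by omega) rfl rfl, Finset.sum_ite_eq]
      exact if_congr (by simp) rfl rfl
    have hsum2 : (∑ j ∈ Finset.range (N-1), if j + 1 = i then x j ^ a j else 0)
        = if 1 ≤ i then x (i-1) ^ a (i-1) else 0 := by
      by_cases h1 : 1 ≤ i
      · rw [show (∑ j ∈ Finset.range (N-1), if j + 1 = i then x j ^ a j else 0)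
            = ∑ j ∈ Finset.range (N-1), if i - 1 = j then x j ^ a j else 0 from
          Finset.sum_congr rfl fun j _ => if_congr (by omega) rfl rfl, Finset.sum_ite_eq,
          if_pos (Finset.mem_range.mpr (by omega)), if_pos h1]
      · rw [if_neg h1]
        exact Finset.sum_eq_zero fun j _ => if_neg (by omega)
    rw [Finset.sum_add_distrib, hsum1, hsum2] at h0
    by_cases hi0 : i = 0
    · subst hi0
      rw [if_pos (by omega), if_neg (by omega), if_neg (by omega), if_pos rfl] at h0
      rw [show (0 + 1) % N = 1 from Nat.mod_eq_of_lt (by omega),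
        show (0 + N - 1) % N = N - 1 from by
          rw [show 0 + N - 1 = N - 1 from by omega]; exact Nat.mod_eq_of_lt (by omega)]
      linear_combination h0
    · by_cases hi1 : i = N - 1
      · subst hi1
        rw [if_neg (by omega), if_pos (by omega), if_pos rfl, if_neg (by omega)] at h0
        rw [show (N - 1 + 1) % N = 0 from by
            rw [show N - 1 + 1 = N from by omega]; exact Nat.mod_self N,
          show (N - 1 + N - 1) % N = N - 1 - 1 from by
            rw [show N - 1 + N - 1 = (N - 1 - 1) + N from by omega, Nat.add_mod_right]
            exact Nat.mod_eq_of_lt (by omega)]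
        linear_combination h0
      · rw [if_pos (by omega), if_pos (by omega), if_neg (by omega), if_neg (by omega)] at h0
        rw [show (i + 1) % N = i + 1 from Nat.mod_eq_of_lt (by omega),
          show (i + N - 1) % N = i - 1 from by
            rw [show i + N - 1 = (i - 1) + N from by omega, Nat.add_mod_right]
            exact Nat.mod_eq_of_lt (by omega)]
        linear_combination h0
  -- backward propagation of zeros: if x j = 0 then x (prev j) = 0
  have hback : ∀ j, j < N → x j = 0 → x ((j + N - 1) % N) = 0 := by
    intro j hj hxj
    have h := key j hj
    rw [hxj, zero_pow (by have := ha j hj; omega)] at h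
    simp only [mul_zero, zero_mul, zero_add] at h
    exact pow_eq_zero_iff (by have := ha ((j + N - 1) % N) (Nat.mod_lt _ (by omega)); omega) |>.mp h
  -- hence nonzeroness propagates forward
  have hfwd : ∀ k, k < N → x k ≠ 0 → x ((k + 1) % N) ≠ 0 := by
    intro k hk hxk hcon
    apply hxk
    have h := hback ((k + 1) % N) (Nat.mod_lt _ (by omega)) hcon
    rwa [show ((k + 1) % N + N - 1) % N = k from by
      rw [show (k + 1) % N + N - 1 = (k + 1) % N + (N - 1) from by omega, Nat.mod_add_mod,
        show k + 1 + (N - 1) = k + N from by omega, Nat.add_mod_right]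
      exact Nat.mod_eq_of_lt hk] at h
  by_contra hcon
  push_neg at hcon
  obtain ⟨j0, hj0, hxj0⟩ := hcon
  -- all coordinates are nonzero
  have hall : ∀ k, x ((j0 + k) % N) ≠ 0 := by
    intro k
    induction k with
    | zero => rwa [Nat.add_zero, Nat.mod_eq_of_lt hj0]
    | succ k ih =>
      have := hfwd ((j0 + k) % N) (Nat.mod_lt _ (by omega)) ih
      rwa [Nat.mod_add_mod] at this
  have hnz : ∀ m, m < N → x m ≠ 0 := by
    intro m hm
    have := hall (m + N - j0)
    rwa [show j0 + (m + N - j0) = m + N from by omega, Nat.add_mod_right,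
      Nat.mod_eq_of_lt hm] at this
  -- the chain of monomials
  set M : ℕ → ℂ := fun k => x (k % N) ^ a (k % N) * x ((k + 1) % N) with hM
  have hchain : ∀ k, (a ((k + 1) % N) : ℂ) * M (k + 1) = - M k := by
    intro k
    have hi : (k + 1) % N < N := Nat.mod_lt _ (by omega)
    have h := key ((k + 1) % N) hi
    rw [show ((k + 1) % N + 1) % N = (k + 2) % N from by rw [Nat.mod_add_mod],
      show ((k + 1) % N + N - 1) % N = k % N from by
        rw [show (k + 1) % N + N - 1 = (k + 1) % N + (N - 1) from by omega, Nat.mod_add_mod,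
          show k + 1 + (N - 1) = k + N from by omega, Nat.add_mod_right]] at h
    have h2 := congrArg (· * x ((k + 1) % N)) h
    simp only [add_mul, zero_mul] at h2
    simp only [hM]
    rw [show (k + 1 + 1) % N = (k + 2) % N from by norm_num]
    have hpow : x ((k + 1) % N) ^ (a ((k + 1) % N) - 1) * x ((k + 1) % N)
        = x ((k + 1) % N) ^ a ((k + 1) % N) :=
      pow_sub_one_mul (by have := ha _ hi; omega) _
    linear_combination h2 - (a ((k + 1) % N) : ℂ) * x ((k + 2) % N) * hpow
  -- norm inequality around the loop
  have hstep : ∀ k, 2 * ‖M (k + 1)‖ ≤ ‖M k‖ := by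
    intro k
    have h := congrArg norm (hchain k)
    rw [norm_neg, norm_mul, Complex.norm_natCast] at h
    have h2 : (2 : ℝ) ≤ (a ((k + 1) % N) : ℝ) := by
      have := ha ((k + 1) % N) (Nat.mod_lt _ (by omega)); exact_mod_cast this
    nlinarith [norm_nonneg (M (k + 1))]
  have hiter : ∀ k, 2 ^ k * ‖M k‖ ≤ ‖M 0‖ := by
    intro k
    induction k with
    | zero => simp
    | succ k ih =>
      have := hstep k
      have h2 : (0:ℝ) ≤ 2 ^ k := by positivity
      calc 2 ^ (k+1) * ‖M (k+1)‖ = 2 ^ k * (2 * ‖M (k+1)‖) := by ring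
        _ ≤ 2 ^ k * ‖M k‖ := by nlinarith
        _ ≤ ‖M 0‖ := ih
  have hMN : M N = M 0 := by
    simp only [hM]
    rw [Nat.mod_self, Nat.zero_add, show (N + 1) % N = 1 % N from by
      rw [show N + 1 = 1 + N from by omega, Nat.add_mod_right], Nat.zero_mod]
  have hM0 : M 0 ≠ 0 := by
    have h0N : (0:ℕ) % N = 0 := Nat.zero_mod N
    have h1N : (0+1) % N = 1 := by rw [Nat.zero_add]; exact Nat.mod_eq_of_lt (by omega)
    simp only [hM, h0N, h1N]
    exact mul_ne_zero (pow_ne_zero _ (hnz 0 (by omega))) (hnz 1 (by omega))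
  have hM0' : 0 < ‖M 0‖ := norm_pos_iff.mpr hM0
  have h2N : (4:ℝ) ≤ 2 ^ N := by
    calc (4:ℝ) = 2 ^ 2 := by norm_num
      _ ≤ 2 ^ N := pow_le_pow_right₀ (by norm_num) hN
  have := hiter N
  rw [hMN] at this
  nlinarith
end
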